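/- For every graph G, the critical difference satisfies d(G) ≥ α(G) - μ(G). -/

import Mathlib

open SimpleGraph

variable {V : Type*}

/-- A set of vertices is independent: no two of its vertices are adjacent. -/
def IsIndep (G : SimpleGraph V) (s : Set V) : Prop :=
  s.Pairwise fun a b => ¬ G.Adj a b

/-- The independence number α(G). -/
noncomputable def alphaNum (G : SimpleGraph V) : ℕ :=
  sSup {n | ∃ s : Set V, IsIndep G s ∧ s.ncard = n}

/-- The matching number μ(G). -/
noncomputable def muNum (G : SimpleGraph V) : ℕ :=
  sSup {n | ∃ M : SimpleGraph.Subgraph G, M.IsMatching ∧ M.edgeSet.ncard = n}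

/-- The neighborhood N(A) of a set of vertices. -/
def nbhd (G : SimpleGraph V) (A : Set V) : Set V := {v | ∃ a ∈ A, G.Adj a v}

/-- The difference d(A) = |A| - |N(A)| of a set of vertices. -/
noncomputable def diffSet (G : SimpleGraph V) (A : Set V) : ℤ :=
  (A.ncard : ℤ) - (nbhd G A).ncard

/-- The critical difference d(G). -/
noncomputable def critDiff (G : SimpleGraph V) : ℤ :=
  sSup {d | ∃ I : Set V, IsIndep G I ∧ diffSet G I = d}

/-- A critical independent set: an independent set attaining the critical difference. -/
def IsCriticalIndep (G : SimpleGraph V) (A : Set V) : Prop :=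
  IsIndep G A ∧ diffSet G A = critDiff G

/-- ker(G): the intersection of all critical independent sets. -/
noncomputable def kerSet (G : SimpleGraph V) : Set V :=
  ⋂₀ {A | IsCriticalIndep G A}

/-- A maximum independent set. -/
noncomputable def IsMaxIndep (G : SimpleGraph V) (S : Set V) : Prop :=
  IsIndep G S ∧ S.ncard = alphaNum G

/-- core(G): the intersection of all maximum independent sets. -/
noncomputable def coreSet (G : SimpleGraph V) : Set V :=
  ⋂₀ {S | IsMaxIndep G S}

/-- A König–Egerváry graph: α(G) + μ(G) = n(G). -/
def KonigEgervary (G : SimpleGraph V) : Prop :=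
  alphaNum G + muNum G = Nat.card V

theorem stmt_9 [Fintype V] (G : SimpleGraph V) :
    (alphaNum G : ℤ) - (muNum G : ℤ) ≤ critDiff G := by
  classical
  have hnbhd_empty : nbhd G (∅ : Set V) = ∅ := by ext v; simp [nbhd]
  have hdiff_empty : diffSet G (∅ : Set V) = 0 := by simp [diffSet, hnbhd_empty]
  have hindep_empty : IsIndep G (∅ : Set V) := Set.pairwise_empty _
  have hcritBdd : BddAbove {d | ∃ I : Set V, IsIndep G I ∧ diffSet G I = d} := by
    refine ⟨(Fintype.card V : ℤ), ?_⟩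
    rintro d ⟨I, -, rfl⟩
    have h1 : I.ncard ≤ Fintype.card V := by
      simpa [Set.ncard_univ, Nat.card_eq_fintype_card] using
        Set.ncard_le_ncard (Set.subset_univ I) Set.finite_univ
    have h2 : (0 : ℤ) ≤ ((nbhd G I).ncard : ℤ) := Int.ofNat_nonneg _
    simp only [diffSet]
    omega
  have hcrit_ge : ∀ I : Set V, IsIndep G I → diffSet G I ≤ critDiff G := fun I hI =>
    le_csSup hcritBdd ⟨I, hI, rfl⟩
  have hcrit0 : (0 : ℤ) ≤ critDiff G := hdiff_empty ▸ hcrit_ge ∅ hindep_empty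
  have hμ_ge : ∀ M : Subgraph G, M.IsMatching → M.edgeSet.ncard ≤ muNum G := by
    intro M hM
    refine le_csSup ⟨Fintype.card (Sym2 V), ?_⟩ ⟨M, hM, rfl⟩
    rintro n ⟨N, -, rfl⟩
    simpa [Set.ncard_univ, Nat.card_eq_fintype_card] using
      Set.ncard_le_ncard (Set.subset_univ N.edgeSet) Set.finite_univ
  -- get a maximum independent set S
  have hαmem : ∃ s : Set V, IsIndep G s ∧ s.ncard = alphaNum G := by
    have h : sSup {n | ∃ s : Set V, IsIndep G s ∧ s.ncard = n} ∈
        {n | ∃ s : Set V, IsIndep G s ∧ s.ncard = n} := by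
      apply Nat.sSup_mem
      · exact ⟨0, ∅, hindep_empty, by simp⟩
      refine ⟨Fintype.card V, ?_⟩
      rintro n ⟨s, -, rfl⟩
      simpa [Set.ncard_univ, Nat.card_eq_fintype_card] using
        Set.ncard_le_ncard (Set.subset_univ s) Set.finite_univ
    exact h
  obtain ⟨S, hSind, hScard⟩ := hαmem
  -- maximize diffSet over subsets of S
  obtain ⟨I, hIS, hImax⟩ := Set.Finite.exists_maximalFor (diffSet G) {J : Set V | J ⊆ S}
    (Set.toFinite _) ⟨∅, Set.empty_subset S⟩
  have hmax : ∀ J : Set V, J ⊆ S → diffSet G J ≤ diffSet G I := by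
    intro J hJ
    by_contra h
    push_neg at h
    have := hImax hJ h.le
    omega
  set k : ℤ := diffSet G I with hkdef
  have hk0 : 0 ≤ k := hdiff_empty ▸ hmax ∅ (Set.empty_subset S)
  have hIind : IsIndep G I := hSind.mono hIS
  have hkcrit : k ≤ critDiff G := hcrit_ge I hIind
  set κ : ℕ := k.toNat with hκdef
  have hκ : (κ : ℤ) = k := Int.toNat_of_nonneg hk0
  rcases S.eq_empty_or_nonempty with hSe | hSe
  · have hα0 : alphaNum G = 0 := by rw [← hScard, hSe]; simp
    have hμ0 : (0 : ℤ) ≤ (muNum G : ℤ) := Int.ofNat_nonneg _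
    rw [hα0]
    push_cast
    linarith
  obtain ⟨v₀, hv₀⟩ := hSe
  haveI : Fintype ↥S := S.toFinite.fintype
  have hcardS : Fintype.card ↥S = S.ncard := by
    rw [← Nat.card_coe_set_eq, Nat.card_eq_fintype_card]
  -- Hall setup
  set t : ↥S → Finset (V ⊕ Fin κ) := fun a =>
    ((G.neighborFinset ↑a).image Sum.inl) ∪ ((Finset.univ : Finset (Fin κ)).image Sum.inr)
    with htdef
  have hHall : ∀ A : Finset ↥S, A.card ≤ (A.biUnion t).card := by
    intro A
    rcases A.eq_empty_or_nonempty with rfl | hA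
    · simp
    · set NA : Finset V := A.biUnion (fun a => G.neighborFinset ↑a) with hNAdef
      have hun : A.biUnion t =
          (NA.image Sum.inl) ∪ ((Finset.univ : Finset (Fin κ)).image Sum.inr) := by
        ext x
        simp only [Finset.mem_biUnion, Finset.mem_union, Finset.mem_image, htdef, hNAdef]
        constructor
        · rintro ⟨a, ha, (⟨u, hu, rfl⟩ | ⟨i, hi, rfl⟩)⟩
          · exact Or.inl ⟨u, ⟨a, ha, hu⟩, rfl⟩
          · exact Or.inr ⟨i, hi, rfl⟩
        · rintro (⟨u, ⟨a, ha, hu⟩, rfl⟩ | ⟨i, hi, rfl⟩)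
          · exact ⟨a, ha, Or.inl ⟨u, hu, rfl⟩⟩
          · exact ⟨hA.choose, hA.choose_spec, Or.inr ⟨i, hi, rfl⟩⟩
      have hdisj : Disjoint (NA.image Sum.inl)
          ((Finset.univ : Finset (Fin κ)).image Sum.inr) := by
        rw [Finset.disjoint_left]
        rintro x hx hx'
        simp only [Finset.mem_image] at hx hx'
        obtain ⟨u, -, rfl⟩ := hx
        obtain ⟨i, -, h⟩ := hx'
        exact Sum.inr_ne_inl h
      have hcard : (A.biUnion t).card = NA.card + κ := by
        rw [hun, Finset.card_union_of_disjoint hdisj,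
          Finset.card_image_of_injective _ Sum.inl_injective,
          Finset.card_image_of_injective _ Sum.inr_injective]
        simp
      rw [hcard]
      -- now the deficiency bound
      set A' : Set V := Subtype.val '' (↑A : Set ↥S) with hA'def
      have hA'S : A' ⊆ S := by
        rintro x ⟨a, -, rfl⟩
        exact a.2
      have hA'card : A'.ncard = A.card := by
        rw [hA'def, Set.ncard_image_of_injOn Subtype.val_injective.injOn,
          Set.ncard_coe_finset]
      have hnb : nbhd G A' = (↑NA : Set V) := by
        ext v
        simp only [nbhd, hA'def, Set.mem_setOf_eq, Finset.coe_biUnion, hNAdef,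
          Set.mem_iUnion, Finset.mem_coe, SimpleGraph.mem_neighborFinset]
        constructor
        · rintro ⟨x, ⟨a, ha, rfl⟩, hadj⟩
          exact ⟨a, ha, hadj⟩
        · rintro ⟨a, ha, hadj⟩
          exact ⟨↑a, ⟨a, ha, rfl⟩, hadj⟩
      have hnbcard : (nbhd G A').ncard = NA.card := by rw [hnb, Set.ncard_coe_finset]
      have hd : diffSet G A' ≤ k := hmax A' hA'S
      rw [diffSet, hA'card, hnbcard] at hd
      omega
  obtain ⟨f, hfinj, hft⟩ := (Finset.all_card_le_biUnion_card_iff_exists_injective t).1 hHall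
  have hfprop : ∀ (a : ↥S) (u : V), f a = Sum.inl u → G.Adj ↑a u ∧ u ∉ S := by
    intro a u hu
    have h := hft a
    rw [hu, htdef] at h
    simp only [Finset.mem_union, Finset.mem_image] at h
    rcases h with ⟨w, hw, hwe⟩ | ⟨i, -, hie⟩
    · have hww : w = u := Sum.inl_injective hwe
      rw [hww] at hw
      have hadj : G.Adj ↑a u := by simpa using hw
      refine ⟨hadj, fun huS => ?_⟩
      exact hSind a.2 huS hadj.ne hadj
    · exact absurd hie (Sum.inr_ne_inl)
  set g : ↥S → V := fun a => ((f a).getLeft?).getD v₀ with hgdef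
  set sL : Finset ↥S := Finset.univ.filter (fun a => (f a).isLeft = true) with hsLdef
  have hgL : ∀ a ∈ sL, f a = Sum.inl (g a) := by
    intro a ha
    rw [hsLdef, Finset.mem_filter] at ha
    cases h : f a with
    | inl u => simp [hgdef, h]
    | inr i => rw [h] at ha; simp at ha
  -- |sL| ≥ |S| - κ
  have hsR : (Finset.univ.filter (fun a : ↥S => ¬ ((f a).isLeft = true))).card ≤ κ := by
    have h2 : ((Finset.univ : Finset (Fin κ)).image (Sum.inr : Fin κ → V ⊕ Fin κ)).card = κ := by
      rw [Finset.card_image_of_injective _ Sum.inr_injective]; simp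
    refine le_trans (Finset.card_le_card_of_injOn f ?_ hfinj.injOn) (le_of_eq h2)
    intro a ha
    rw [Finset.mem_coe, Finset.mem_filter] at ha
    cases h : f a with
    | inl u => rw [h] at ha; simp at ha
    | inr i => simp
  have hsLcard : S.ncard ≤ sL.card + κ := by
    have h := Finset.card_filter_add_card_filter_not (s := (Finset.univ : Finset ↥S))
      (fun a : ↥S => (f a).isLeft = true)
    rw [Finset.card_univ, hcardS, ← hsLdef] at h
    omega
  -- build the matching
  set M : Subgraph G :=
    { verts := {x | ∃ a : ↥S, (↑a = x ∧ (f a).isLeft) ∨ f a = Sum.inl x}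
      Adj := fun x y => (∃ a : ↥S, ↑a = x ∧ f a = Sum.inl y) ∨
        (∃ a : ↥S, ↑a = y ∧ f a = Sum.inl x)
      adj_sub := by
        rintro x y (⟨a, rfl, ha⟩ | ⟨a, rfl, ha⟩)
        · exact (hfprop a y ha).1
        · exact (hfprop a x ha).1.symm
      edge_vert := by
        rintro x y (⟨a, rfl, ha⟩ | ⟨a, rfl, ha⟩)
        · exact ⟨a, Or.inl ⟨rfl, by rw [ha]; rfl⟩⟩
        · exact ⟨a, Or.inr ha⟩
      symm := by
        constructor
        rintro x y (h | h)
        · exact Or.inr h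
        · exact Or.inl h } with hMdef
  have hMmatch : M.IsMatching := by
    rintro v ⟨a, (⟨rfl, hL⟩ | hinl)⟩
    · obtain ⟨u, hu⟩ : ∃ u, f a = Sum.inl u := by
        cases h : f a with
        | inl u => exact ⟨u, rfl⟩
        | inr i => rw [h] at hL; simp at hL
      refine ⟨u, Or.inl ⟨a, rfl, hu⟩, ?_⟩
      rintro w (⟨b, hb, hbw⟩ | ⟨b, hbw, hbv⟩)
      · obtain rfl : b = a := Subtype.val_injective hb
        rw [hu] at hbw
        exact (Sum.inl_injective hbw).symm
      · exact absurd a.2 (hfprop b _ hbv).2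
    · refine ⟨↑a, Or.inr ⟨a, rfl, hinl⟩, ?_⟩
      rintro w (⟨b, hbv, hbw⟩ | ⟨b, hbw, hbv⟩)
      · have := (hfprop a v hinl).2
        rw [← hbv] at this
        exact absurd b.2 this
      · obtain rfl : b = a := hfinj (hbv.trans hinl.symm)
        exact hbw.symm
  -- matching size
  have hedge : sL.card ≤ M.edgeSet.ncard := by
    set ψ : ↥S → Sym2 V := fun a => s(↑a, g a) with hψdef
    have hmaps : ∀ a ∈ (↑sL : Set ↥S), ψ a ∈ M.edgeSet := by
      intro a ha
      rw [Finset.mem_coe] at ha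
      exact Subgraph.mem_edgeSet.2 (Or.inl ⟨a, rfl, hgL a ha⟩)
    have hinj : Set.InjOn ψ (↑sL : Set ↥S) := by
      intro a ha b hb hab
      rw [Finset.mem_coe] at ha hb
      rw [hψdef, Sym2.eq_iff] at hab
      rcases hab with ⟨h1, h2⟩ | ⟨h1, h2⟩
      · exact Subtype.val_injective h1
      · exact absurd (h1 ▸ a.2) (hfprop b _ (hgL b hb)).2
    calc sL.card = (↑sL : Set ↥S).ncard := (Set.ncard_coe_finset _).symm
      _ = (ψ '' ↑sL).ncard := (Set.ncard_image_of_injOn hinj).symm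
      _ ≤ M.edgeSet.ncard := Set.ncard_le_ncard (fun x ⟨a, ha, hx⟩ => hx ▸ hmaps a ha)
        (Set.toFinite _)
  have hμ : S.ncard ≤ muNum G + κ := by
    have := hμ_ge M hMmatch
    omega
  -- conclude
  have hα : (alphaNum G : ℤ) = S.ncard := by rw [hScard]
  have : (alphaNum G : ℤ) - (muNum G : ℤ) ≤ k := by
    rw [hα]
    have : (S.ncard : ℤ) ≤ (muNum G : ℤ) + κ := by exact_mod_cast hμ
    omega
  linarith
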